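/- Let S ⊆ ℝᵐ ∖ {0} be a compact set and let T = cone(S) be the set of all finite nonnegative combinations of elements of S (including 0). If the closure cl(T) contains no lines (i.e., cl(T) ∩ (−cl(T)) = {0}), then T is closed. -/

import Mathlib

open Finset

/-- Dot product on `Fin n → ℝ`. -/
noncomputable def dotp {n : ℕ} (y x : Fin n → ℝ) : ℝ := ∑ i, y i * x i

/-- Support function `σ_X : ℝⁿ → ℝ ∪ {±∞}` of a set `X ⊆ ℝⁿ`. -/
noncomputable def suppFn {n : ℕ} (X : Set (Fin n → ℝ)) (y : Fin n → ℝ) : EReal :=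
  ⨆ x ∈ X, ((dotp y x : ℝ) : EReal)

/-- The linear map `𝒜 : ℝ^𝒜 → ℝⁿ`, `ν ↦ Σ_α ν_α α`. -/
noncomputable def Amap {n m : ℕ} (A : Fin m → Fin n → ℝ) (ν : Fin m → ℝ) : Fin n → ℝ :=
  fun j => ∑ i, ν i * A i j

/-- `N_β = {ν : ν_α ≥ 0 (α ≠ β), Σ ν_α = 0}`. -/
def Nbeta {m : ℕ} (b : Fin m) : Set (Fin m → ℝ) :=
  {ν | (∀ i, i ≠ b → 0 ≤ ν i) ∧ ∑ i, ν i = 0}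

/-- Two vectors are proportional if one is a scalar multiple of the other. -/
def Proportional {m : ℕ} (u v : Fin m → ℝ) : Prop :=
  ∃ t : ℝ, u = t • v ∨ v = t • u

/-- The augmented support function `ν ↦ σ_X(-𝒜ν)`. -/
noncomputable def sigA {n m : ℕ} (X : Set (Fin n → ℝ)) (A : Fin m → Fin n → ℝ)
    (ν : Fin m → ℝ) : EReal :=
  suppFn X (-(Amap A ν))

/-- The map `ν ↦ σ_X(-𝒜ν)` is affine on the segment `[ν1, ν2]`. -/
def SigmaAffineOnSeg {n m : ℕ} (X : Set (Fin n → ℝ)) (A : Fin m → Fin n → ℝ)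
    (ν1 ν2 : Fin m → ℝ) : Prop :=
  ∀ t : ℝ, t ∈ Set.Icc (0:ℝ) 1 →
    sigA X A (t • ν1 + (1 - t) • ν2) =
      (t : EReal) * sigA X A ν1 + ((1 - t : ℝ) : EReal) * sigA X A ν2

/-- `ν` is an `X`-circuit of `𝒜` (with negative index allowed only at `b`). -/
def IsXCircuit {n m : ℕ} (X : Set (Fin n → ℝ)) (A : Fin m → Fin n → ℝ)
    (b : Fin m) (ν : Fin m → ℝ) : Prop :=
  ν ∈ Nbeta b ∧ ν ≠ 0 ∧ sigA X A ν < ⊤ ∧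
  ¬ ∃ (ν1 ν2 : Fin m → ℝ) (θ : ℝ), ν1 ∈ Nbeta b ∧ ν2 ∈ Nbeta b ∧
      ¬ Proportional ν1 ν2 ∧ θ ∈ Set.Ioo (0:ℝ) 1 ∧
      ν = θ • ν1 + (1 - θ) • ν2 ∧ SigmaAffineOnSeg X A ν1 ν2

/-- All finite nonnegative combinations of elements of `S` (including `0`). -/
def coneHull {E : Type*} [AddCommMonoid E] [SMul ℝ E] (S : Set E) : Set E :=
  {x | ∃ (k : ℕ) (t : Fin k → ℝ) (v : Fin k → E),
    (∀ j, 0 ≤ t j) ∧ (∀ j, v j ∈ S) ∧ x = ∑ j, t j • v j}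

/-- `v` is an edge generator of the convex cone `K`. -/
def IsEdgeGenerator {E : Type*} [AddCommMonoid E] [SMul ℝ E] (K : Set E) (v : E) : Prop :=
  v ≠ 0 ∧ v ∈ K ∧ ∀ u ∈ K, ∀ w ∈ K, v = u + w →
    (∃ a : ℝ, 0 ≤ a ∧ u = a • v) ∧ (∃ b : ℝ, 0 ≤ b ∧ w = b • v)

/-- The `X`-AGE cone `C_X(𝒜, β)`, as a cone of coefficient vectors. -/
def AgeCone {n m : ℕ} (X : Set (Fin n → ℝ)) (A : Fin m → Fin n → ℝ) (b : Fin m) :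
    Set (Fin m → ℝ) :=
  {c | (∀ i, i ≠ b → 0 ≤ c i) ∧ ∀ x ∈ X, 0 ≤ ∑ i, c i * Real.exp (dotp (A i) x)}

/-- The `X`-SAGE cone `C_X(𝒜) = Σ_β C_X(𝒜, β)`. -/
def Sage {n m : ℕ} (X : Set (Fin n → ℝ)) (A : Fin m → Fin n → ℝ) : Set (Fin m → ℝ) :=
  {c | ∃ f : Fin m → (Fin m → ℝ), (∀ b, f b ∈ AgeCone X A b) ∧ c = ∑ b, f b}

/-- One summand of the relative entropy, with the conventions `0·log 0 = 0` and
`D = ∞` if `a > 0` while `c ≤ 0`. -/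
noncomputable def relEnt (a c : ℝ) : EReal :=
  if a = 0 then 0 else if 0 < c then ((a * Real.log (a / c) : ℝ) : EReal) else ⊤

/-- The relative entropy `D(ν_{∖β}, e · c_{∖β})`. -/
noncomputable def relEntSum {m : ℕ} (b : Fin m) (ν c : Fin m → ℝ) : EReal :=
  ∑ i ∈ Finset.univ.erase b, relEnt (ν i) (Real.exp 1 * c i)

/-- Condition (★): `ν ∈ N_β`, `ν ≠ 0`, `σ_X(-𝒜ν) + D(ν_{∖β}, e c_{∖β}) ≤ c_β`. -/
def StarCond {n m : ℕ} (X : Set (Fin n → ℝ)) (A : Fin m → Fin n → ℝ)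
    (b : Fin m) (c ν : Fin m → ℝ) : Prop :=
  ν ∈ Nbeta b ∧ ν ≠ 0 ∧ sigA X A ν + relEntSum b ν c ≤ (c b : EReal)

/-- The `λ`-witnessed AGE cone `C_X(𝒜, λ)` for a normalized `λ` with `λ_β = -1`. -/
noncomputable def WitnessCone {n m : ℕ} (X : Set (Fin n → ℝ)) (A : Fin m → Fin n → ℝ)
    (b : Fin m) (l : Fin m → ℝ) : Set (Fin m → ℝ) :=
  {c | (∀ i, i ≠ b → 0 ≤ c i) ∧
    (-(c b)) * Real.exp ((sigA X A l).toReal) ≤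
      ∏ i ∈ Finset.univ.filter (fun i => 0 < l i), (c i / l i) ^ (l i)}

/-- Normalized `X`-circuits in `N_β`. -/
def LambdaB {n m : ℕ} (X : Set (Fin n → ℝ)) (A : Fin m → Fin n → ℝ) (b : Fin m) :
    Set (Fin m → ℝ) :=
  {l | IsXCircuit X A b l ∧ l b = -1}

/-- All normalized `X`-circuits of `𝒜`. -/
def Lambda {n m : ℕ} (X : Set (Fin n → ℝ)) (A : Fin m → Fin n → ℝ) : Set (Fin m → ℝ) :=
  ⋃ b, LambdaB X A b

/-- Functional form `φ_λ = (λ, σ_X(-𝒜λ)) ∈ ℝ^𝒜 × ℝ`. -/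
noncomputable def phiVec {n m : ℕ} (X : Set (Fin n → ℝ)) (A : Fin m → Fin n → ℝ)
    (l : Fin m → ℝ) : (Fin m → ℝ) × ℝ :=
  (l, (sigA X A l).toReal)

/-- Functional form as an affine function `φ_λ(y) = Σ y_α λ_α + σ_X(-𝒜λ)`. -/
noncomputable def phiFun {n m : ℕ} (X : Set (Fin n → ℝ)) (A : Fin m → Fin n → ℝ)
    (l : Fin m → ℝ) (y : Fin m → ℝ) : ℝ :=
  (∑ i, y i * l i) + (sigA X A l).toReal

/-- The circuit graph `G_X(𝒜)`. -/
noncomputable def circuitGraph {n m : ℕ} (X : Set (Fin n → ℝ)) (A : Fin m → Fin n → ℝ) :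
    Set ((Fin m → ℝ) × ℝ) :=
  coneHull ((phiVec X A '' Lambda X A) ∪ {((0 : Fin m → ℝ), (1 : ℝ))})

/-- The reduced normalized `X`-circuits `Λ*_X(𝒜)`. -/
noncomputable def LambdaStar {n m : ℕ} (X : Set (Fin n → ℝ)) (A : Fin m → Fin n → ℝ) :
    Set (Fin m → ℝ) :=
  {l | l ∈ Lambda X A ∧ IsEdgeGenerator (circuitGraph X A) (phiVec X A l)}

/-- `λ`-witnessed AGE cone for a normalized circuit, with `β` recovered from `λ`. -/
noncomputable def WitnessConeL {n m : ℕ} (X : Set (Fin n → ℝ)) (A : Fin m → Fin n → ℝ)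
    (l : Fin m → ℝ) : Set (Fin m → ℝ) :=
  ⋃ b ∈ {b : Fin m | l b = -1}, WitnessCone X A b l

/-- Dual cone of a set of coefficient vectors in `ℝ^𝒜`. -/
def dualConeV {m : ℕ} (K : Set (Fin m → ℝ)) : Set (Fin m → ℝ) :=
  {v | ∀ c ∈ K, 0 ≤ ∑ i, v i * c i}

/-- Dual cone of a subset of `ℝ^𝒜 × ℝ`. -/
def dualConeP {m : ℕ} (K : Set ((Fin m → ℝ) × ℝ)) : Set ((Fin m → ℝ) × ℝ) :=
  {p | ∀ q ∈ K, 0 ≤ (∑ i, p.1 i * q.1 i) + p.2 * q.2}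

/-- The basis functions `x ↦ exp(αᵀx)`, `α ∈ 𝒜`, are linearly independent on `X`. -/
def ExpLinIndep {n m : ℕ} (X : Set (Fin n → ℝ)) (A : Fin m → Fin n → ℝ) : Prop :=
  LinearIndependent ℝ (fun i : Fin m => fun x : X => Real.exp (dotp (A i) (x : Fin n → ℝ)))

/-- `X` is a polyhedron: an intersection of finitely many closed halfspaces. -/
def IsPolyhedron {n : ℕ} (X : Set (Fin n → ℝ)) : Prop :=
  ∃ (k : ℕ) (a : Fin k → Fin n → ℝ) (bb : Fin k → ℝ),
    X = {x | ∀ i, dotp (a i) x ≤ bb i}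

/-- Minkowski sum `Σ_{l ∈ Λ} C(l)` (finite sums, one summand per `l`;
the empty sum gives `{0}`). -/
def MinkSumOver {m : ℕ} (Λ : Set (Fin m → ℝ)) (C : (Fin m → ℝ) → Set (Fin m → ℝ)) :
    Set (Fin m → ℝ) :=
  {c | ∃ (s : Finset (Fin m → ℝ)) (f : (Fin m → ℝ) → (Fin m → ℝ)),
    (↑s ⊆ Λ) ∧ (∀ l ∈ s, f l ∈ C l) ∧ c = ∑ l ∈ s, f l}

section Aux

variable {E : Type*} [AddCommMonoid E] [Module ℝ E]

lemma sum_smul_mem_coneHull (S : Set E) {ι : Type*} (t : Finset ι) (w : ι → ℝ) (z : ι → E)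
    (hw : ∀ i ∈ t, 0 ≤ w i) (hz : ∀ i ∈ t, z i ∈ S) :
    ∑ i ∈ t, w i • z i ∈ coneHull S := by
  classical
  refine ⟨t.card, fun j => w (t.equivFin.symm j), fun j => z (t.equivFin.symm j), ?_, ?_, ?_⟩
  · intro j; exact hw _ (t.equivFin.symm j).2
  · intro j; exact hz _ (t.equivFin.symm j).2
  · rw [← Finset.sum_coe_sort t (fun i => w i • z i)]
    exact (Fintype.sum_equiv t.equivFin.symm _ _ (fun j => rfl)).symm

lemma pad_sum {M : Type*} [AddCommMonoid M] {c N : ℕ} (hc : c ≤ N) (g : Fin N → M)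
    (hg : ∀ j : Fin N, ¬ (j : ℕ) < c → g j = 0) :
    ∑ j, g j = ∑ i : Fin c, g (Fin.castLE hc i) := by
  classical
  rw [← Finset.sum_image (f := g) (g := Fin.castLE hc)
    (fun x _ y _ h => Fin.castLE_injective hc h)]
  refine (Finset.sum_subset (Finset.subset_univ _) ?_).symm
  intro j _ hj
  refine hg j fun hlt => hj ?_
  exact Finset.mem_image.mpr ⟨⟨(j : ℕ), hlt⟩, Finset.mem_univ _, by ext; rfl⟩

end Aux

lemma isCompact_convexHull_fin {m : ℕ} {S : Set (Fin m → ℝ)} (hS : IsCompact S)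
    (hne : S.Nonempty) : IsCompact (convexHull ℝ S) := by
  classical
  obtain ⟨y0, hy0⟩ := hne
  set N := m + 2 with hN
  set g : (Fin N → ℝ) × (Fin N → (Fin m → ℝ)) → (Fin m → ℝ) :=
    fun p => ∑ i, p.1 i • p.2 i with hgdef
  have hg : Continuous g := by
    apply continuous_finset_sum
    intro i _
    exact ((continuous_apply i).comp continuous_fst).smul
      ((continuous_apply i).comp continuous_snd)
  have hEq : convexHull ℝ S =
      g '' (stdSimplex ℝ (Fin N) ×ˢ Set.univ.pi fun _ => S) := by
    apply Set.Subset.antisymm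
    · intro x hx
      rw [convexHull_eq_union] at hx
      simp only [Set.mem_iUnion] at hx
      obtain ⟨t, htS, hAI, hxt⟩ := hx
      have htne : t.Nonempty := by
        rcases t.eq_empty_or_nonempty with rfl | h
        · simp [convexHull_empty] at hxt
        · exact h
      have hcard : t.card ≤ N := by
        have h1 := hAI.card_le_finrank_succ
        rw [Fintype.card_coe] at h1
        have h2 : Module.finrank ℝ (Fin m → ℝ) = m := by simp
        have h3 := Submodule.finrank_le
          (vectorSpan ℝ (Set.range (Subtype.val : t → (Fin m → ℝ))))
        omega
      obtain ⟨w, hw0, hw1, hwx⟩ := Finset.mem_convexHull'.mp hxt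
      set e := t.equivFin with he
      set W : Fin N → ℝ := fun j =>
        if h : (j : ℕ) < t.card then w (e.symm ⟨j, h⟩) else 0 with hW
      set V : Fin N → (Fin m → ℝ) := fun j =>
        if h : (j : ℕ) < t.card then (e.symm ⟨j, h⟩ : Fin m → ℝ) else y0 with hV
      have hgood : ∀ i : Fin t.card,
          W (Fin.castLE hcard i) = w (e.symm i) ∧
          V (Fin.castLE hcard i) = (e.symm i : Fin m → ℝ) := by
        intro i
        constructor
        · simp only [hW, Fin.coe_castLE, i.is_lt, dif_pos]
        · simp only [hV, Fin.coe_castLE, i.is_lt, dif_pos]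
      have hsum1 : ∑ j, W j = 1 := by
        rw [pad_sum hcard W (fun j hj => by simp only [hW, dif_neg hj])]
        rw [← hw1, ← Finset.sum_coe_sort t w]
        refine Fintype.sum_equiv e.symm _ _ fun i => ?_
        rw [(hgood i).1]
      have hsumx : ∑ j, W j • V j = x := by
        rw [pad_sum hcard (fun j => W j • V j)
          (fun j hj => by simp only [hW, dif_neg hj, zero_smul])]
        rw [← hwx, ← Finset.sum_coe_sort t (fun y => w y • y)]
        refine Fintype.sum_equiv e.symm _ _ fun i => ?_
        rw [(hgood i).1, (hgood i).2]
      refine ⟨(W, V), ⟨⟨fun j => by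
        by_cases h : (j : ℕ) < t.card
        · simpa only [hW, dif_pos h] using hw0 _ (e.symm ⟨j, h⟩).2
        · simp only [hW, dif_neg h, le_refl], hsum1⟩, ?_⟩, hsumx⟩
      intro j _
      by_cases h : (j : ℕ) < t.card
      · simpa only [hV, dif_pos h] using htS (e.symm ⟨j, h⟩).2
      · simpa only [hV, dif_neg h] using hy0
    · rintro x ⟨⟨w, v⟩, ⟨⟨hw0, hw1⟩, hv⟩, rfl⟩
      have := Finset.centerMass_mem_convexHull (Finset.univ) (w := w) (z := v)
        (fun i _ => hw0 i) (by rw [hw1]; exact one_pos)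
        (fun i _ => hv i (Set.mem_univ i))
      rwa [Finset.centerMass_eq_of_sum_1 _ _ hw1] at this
  rw [hEq]
  exact ((isCompact_stdSimplex (𝕜 := ℝ) (ι := Fin N)).prod (isCompact_univ_pi fun _ => hS)).image hg

theorem statement19 {m : ℕ} (S : Set (Fin m → ℝ)) (hS : IsCompact S)
    (h0 : (0 : Fin m → ℝ) ∉ S)
    (hline : closure (coneHull S) ∩ (-(closure (coneHull S))) = {0}) :
    IsClosed (coneHull S) := by
  classical
  rcases S.eq_empty_or_nonempty with rfl | hSne
  · have : coneHull (∅ : Set (Fin m → ℝ)) = {0} := by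
      apply Set.Subset.antisymm
      · rintro x ⟨k, t, v, _, hv, rfl⟩
        rcases Nat.eq_zero_or_pos k with rfl | hk
        · simp
        · exact absurd (hv ⟨0, hk⟩) (Set.notMem_empty _)
      · rintro x rfl
        exact ⟨0, fun j => 0, fun j => j.elim0, fun j => j.elim0, fun j => j.elim0, by simp⟩
    rw [this]; exact isClosed_singleton
  set K := convexHull ℝ S with hK
  have hKcp : IsCompact K := isCompact_convexHull_fin hS hSne
  have hKne : K.Nonempty := hSne.mono (subset_convexHull ℝ S)
  -- 0 is not in the convex hull
  have h0K : (0 : Fin m → ℝ) ∉ K := by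
    intro hmem
    rw [hK, _root_.convexHull_eq, Set.mem_setOf_eq] at hmem
    obtain ⟨ι, t, w, z, hw0, hw1, hz, hcm⟩ := hmem
    rw [Finset.centerMass_eq_of_sum_1 _ _ hw1] at hcm
    have hex : ∃ i ∈ t, 0 < w i := by
      by_contra hcon
      push_neg at hcon
      have : ∑ i ∈ t, w i ≤ 0 := Finset.sum_nonpos hcon
      linarith
    obtain ⟨i0, hi0t, hi0⟩ := hex
    set v : Fin m → ℝ := w i0 • z i0 with hv
    have hvmem : v ∈ coneHull S := by
      have : v = ∑ i ∈ {i0}, w i • z i := by simp [hv]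
      rw [this]
      exact sum_smul_mem_coneHull S _ _ _ (fun i hi => by
        rw [Finset.mem_singleton] at hi; subst hi; exact hi0.le)
        (fun i hi => by rw [Finset.mem_singleton] at hi; subst hi; exact hz _ hi0t)
    have hnvmem : -v ∈ coneHull S := by
      have hsplit : w i0 • z i0 + ∑ i ∈ t.erase i0, w i • z i = 0 := by
        have := Finset.add_sum_erase t (fun i => w i • z i) hi0t
        simpa using this.trans hcm
      have : -v = ∑ i ∈ t.erase i0, w i • z i := by
        rw [hv, neg_eq_iff_add_eq_zero]; linear_combination (norm := module) hsplit
      rw [this]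
      exact sum_smul_mem_coneHull S _ _ _
        (fun i hi => hw0 _ (Finset.mem_of_mem_erase hi))
        (fun i hi => hz _ (Finset.mem_of_mem_erase hi))
    have hvz : v = 0 := by
      have : v ∈ closure (coneHull S) ∩ (-(closure (coneHull S))) :=
        ⟨subset_closure hvmem, by
          rw [Set.mem_neg]; exact subset_closure hnvmem⟩
      rw [hline] at this
      exact this
    rw [hv, smul_eq_zero] at hvz
    rcases hvz with h | h
    · exact hi0.ne' h
    · exact h0 (h ▸ hz _ hi0t)
  -- the factorization of the cone through the convex hull
  have hEq : coneHull S =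
      (fun p : ℝ × (Fin m → ℝ) => p.1 • p.2) '' (Set.Ici 0 ×ˢ K) := by
    apply Set.Subset.antisymm
    · rintro x ⟨k, t, v, ht, hv, rfl⟩
      set T : ℝ := ∑ j, t j with hT
      have hT0 : 0 ≤ T := Finset.sum_nonneg fun j _ => ht j
      rcases eq_or_lt_of_le hT0 with hT' | hT'
      · have hz : ∀ j, t j = 0 := by
          intro j
          have := (Finset.sum_eq_zero_iff_of_nonneg (fun j _ => ht j)).mp hT'.symm
          exact this j (Finset.mem_univ j)
        obtain ⟨y, hy⟩ := hKne
        refine ⟨(0, y), ⟨Set.mem_Ici.mpr le_rfl, hy⟩, ?_⟩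
        simp [hz]
      · refine ⟨(T, Finset.univ.centerMass t v), ⟨hT0, ?_⟩, ?_⟩
        · exact Finset.centerMass_mem_convexHull _ (fun j _ => ht j)
            (by rwa [← hT]) (fun j _ => hv j)
        · show T • Finset.univ.centerMass t v = _
          rw [Finset.centerMass, ← hT, smul_smul, mul_inv_cancel₀ (ne_of_gt hT'), one_smul]
    · rintro x ⟨⟨a, y⟩, ⟨ha, hy⟩, rfl⟩
      rw [hK, _root_.convexHull_eq, Set.mem_setOf_eq] at hy
      obtain ⟨ι, t, w, z, hw0, hw1, hz, hcm⟩ := hy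
      rw [Finset.centerMass_eq_of_sum_1 _ _ hw1] at hcm
      show a • y ∈ _
      have hcm' : ∑ i ∈ t, w i • z i = y := hcm
      have : a • y = ∑ i ∈ t, (a * w i) • z i := by
        rw [← hcm', Finset.smul_sum]
        exact Finset.sum_congr rfl fun i _ => (smul_smul a (w i) (z i))
      rw [this]
      exact sum_smul_mem_coneHull S _ _ _
        (fun i hi => mul_nonneg (Set.mem_Ici.mp ha) (hw0 i hi)) hz
  -- closedness of the conic extension of a compact base avoiding 0
  rw [hEq]
  apply isClosed_of_closure_subset
  intro x hx
  obtain ⟨u, hu, hux⟩ := mem_closure_iff_seq_limit.mp hx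
  choose p hpmem hpeq using hu
  have hpeq' : ∀ n, (p n).1 • (p n).2 = u n := fun n => hpeq n
  set t : ℕ → ℝ := fun n => (p n).1 with htdef
  set y : ℕ → (Fin m → ℝ) := fun n => (p n).2 with hydef
  have htn : ∀ n, 0 ≤ t n := fun n => (hpmem n).1
  have hyn : ∀ n, y n ∈ K := fun n => (hpmem n).2
  -- a positive lower bound on norms of elements of K
  obtain ⟨y0, hy0K, hy0min⟩ := hKcp.exists_isMinOn hKne continuous_norm.continuousOn
  set δ : ℝ := ‖y0‖ with hδ
  have hδpos : 0 < δ := by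
    rw [hδ, norm_pos_iff]
    intro h
    exact h0K (h ▸ hy0K)
  -- bound on the norms of u n
  obtain ⟨C, hC⟩ := hux.norm.bddAbove_range
  have hCb : ∀ n, ‖u n‖ ≤ C := fun n => hC ⟨n, rfl⟩
  -- bound on t n
  have htb : ∀ n, t n ≤ C / δ := by
    intro n
    rw [le_div_iff₀ hδpos]
    calc t n * δ ≤ t n * ‖y n‖ := by
          exact mul_le_mul_of_nonneg_left (hy0min (hyn n)) (htn n)
      _ = ‖t n • y n‖ := by rw [norm_smul, Real.norm_eq_abs, abs_of_nonneg (htn n)]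
      _ = ‖u n‖ := by rw [hpeq' n]
      _ ≤ C := hCb n
  -- extract convergent subsequences
  obtain ⟨ylim, hylimK, φ, hφ, hyφ⟩ := hKcp.tendsto_subseq hyn
  obtain ⟨a, ha, ψ, hψ, htψ⟩ := (isCompact_Icc (a := (0:ℝ)) (b := C / δ)).tendsto_subseq
    (x := fun k => t (φ k)) (fun k => ⟨htn _, htb _⟩)
  have hy2 : Filter.Tendsto (fun k => y (φ (ψ k))) Filter.atTop (nhds ylim) :=
    hyφ.comp hψ.tendsto_atTop
  have hlim : Filter.Tendsto (fun k => u (φ (ψ k))) Filter.atTop (nhds (a • ylim)) := by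
    have : (fun k => u (φ (ψ k))) = fun k => t (φ (ψ k)) • y (φ (ψ k)) := by
      funext k; rw [← hpeq' (φ (ψ k))]
    rw [this]
    exact htψ.smul hy2
  have hlim2 : Filter.Tendsto (fun k => u (φ (ψ k))) Filter.atTop (nhds x) :=
    hux.comp ((hφ.comp hψ).tendsto_atTop)
  have hxeq : x = a • ylim := tendsto_nhds_unique hlim2 hlim
  exact ⟨(a, ylim), ⟨ha.1, hylimK⟩, hxeq.symm⟩
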